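/- Let q = 2^h, let M be a maximal arc of degree d of Mathon type in PG(2,q) with nucleus n, where d < q/2, and let C be a nondegenerate conic of PG(2,q) with nucleus n that is disjoint from M. Then there exists a line of PG(2,q) meeting neither M nor C. -/

import Mathlib

open scoped Classical

noncomputable section

namespace MaxArc

variable (F : Type) [Field F] [Fintype F]

/-- The absolute trace map of `GF(2^h)` over `GF(2)`, valued in the field itself
(the prime subfield is identified with `{0,1}`). -/
def tr (h : ℕ) (x : F) : F := ∑ i ∈ Finset.range h, x ^ 2 ^ i

/-- The points of `PG(2,q)`. -/
abbrev Pt := Projectivization F (Fin 3 → F)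

/-- The conic `F_{α,β,λ} = {(x,y,z) : α x² + x y + β y² + λ z² = 0}` of `PG(2,q)`.
(The defining equation is homogeneous, so evaluating at the chosen representative
is independent of the choice.) -/
def conicSet (a b l : F) : Set (Pt F) :=
  {P | a * P.rep 0 ^ 2 + P.rep 0 * P.rep 1 + b * P.rep 1 ^ 2 + l * P.rep 2 ^ 2 = 0}

/-- The lines of `PG(2,q)`: zero sets of nonzero linear forms. -/
def IsLine (L : Set (Pt F)) : Prop :=
  ∃ u v w : F, ¬(u = 0 ∧ v = 0 ∧ w = 0) ∧
    L = {P | u * P.rep 0 + v * P.rep 1 + w * P.rep 2 = 0}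

/-- A maximal arc of degree `d`: a nonempty proper set of points met by every line
in exactly `0` or `d` points. -/
def IsMaximalArc (K : Set (Pt F)) (d : ℕ) : Prop :=
  K.Nonempty ∧ K ≠ Set.univ ∧
    ∀ L : Set (Pt F), IsLine F L → (K ∩ L).ncard = 0 ∨ (K ∩ L).ncard = d

/-- The point `(0,0,1)` of `PG(2,q)`. -/
def pt001 : Pt F := Projectivization.mk F ![0, 0, 1] (by
  intro hc
  have h2 := congrFun hc 2
  simp at h2)

/-- A collineation of `PG(2,q)`: the permutation of the point set induced by an
invertible `σ`-semilinear map of `F³` (written as an invertible matrix composed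
with a field automorphism `σ`). -/
def IsCollineation (g : Pt F → Pt F) : Prop :=
  ∃ σ : F ≃+* F, ∃ M : Matrix (Fin 3) (Fin 3) F, IsUnit M.det ∧
    ∀ (v : Fin 3 → F) (hv : v ≠ 0) (hv' : M.mulVec (fun i => σ (v i)) ≠ 0),
      g (Projectivization.mk F v hv) = Projectivization.mk F (M.mulVec (fun i => σ (v i))) hv'

/-- A closed set of conics `{F_{a(λ), b(λ), λ} : λ ∈ Λ}` in `PG(2,q)`, `q = 2^h`. -/
def IsClosedConicSet (h : ℕ) (Λ : Finset F) (a b : F → F) : Prop :=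
  (0 : F) ∉ Λ ∧ (∀ l ∈ Λ, tr F h (a l * b l) = 1) ∧
    ∀ l ∈ Λ, ∀ l' ∈ Λ, l ≠ l' →
      l + l' ∈ Λ ∧ a (l + l') = (a l * l + a l' * l') / (l + l') ∧
        b (l + l') = (b l * l + b l' * l') / (l + l')

/-- The point set of a (Mathon) arc obtained from a family of conics: the union of
the conics together with the common nucleus `(0,0,1)`. -/
def mathonSet (Λ : Finset F) (a b : F → F) : Set (Pt F) :=
  {pt001 F} ∪ ⋃ l ∈ Λ, conicSet F (a l) (b l) l

/-- The Denniston point set determined by `α` and a set `A ⊆ GF(q)`. -/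
def dennistonSet (a : F) (A : Set F) : Set (Pt F) :=
  {pt001 F} ∪ ⋃ l ∈ A \ {0}, conicSet F a 1 l

/-- A degree 4 maximal arc of Denniston type: the image under a collineation of
`{(0,0,1)} ∪ ⋃_{λ ∈ A \ {0}} F_{α,1,λ}` with `Tr(α) = 1` and `A` an additive
subgroup of order 4. -/
def IsDenniston4 (h : ℕ) (K : Set (Pt F)) : Prop :=
  ∃ a : F, tr F h a = 1 ∧ ∃ A : AddSubgroup F, Nat.card A = 4 ∧
    ∃ g : Pt F → Pt F, IsCollineation F g ∧ g '' dennistonSet F a (A : Set F) = K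

/-- `C` is a nondegenerate conic of `PG(2,q)` with nucleus `n`: the zero set of a
nonzero quadratic form, consisting of exactly `q+1` points no three of which are
collinear, all of whose tangent lines pass through `n`. -/
def IsConicWithNucleus (C : Set (Pt F)) (n : Pt F) : Prop :=
  (∃ a b c d e f : F, ¬(a = 0 ∧ b = 0 ∧ c = 0 ∧ d = 0 ∧ e = 0 ∧ f = 0) ∧
      C = {P | a * P.rep 0 ^ 2 + b * P.rep 1 ^ 2 + c * P.rep 2 ^ 2 +
        d * P.rep 0 * P.rep 1 + e * P.rep 0 * P.rep 2 + f * P.rep 1 * P.rep 2 = 0}) ∧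
    C.ncard = Fintype.card F + 1 ∧
    (∀ L : Set (Pt F), IsLine F L → (C ∩ L).ncard ≤ 2) ∧
    (∀ L : Set (Pt F), IsLine F L → (C ∩ L).ncard = 1 → n ∈ L)

/-- A maximal arc of degree `d` of Mathon type in `PG(2,q)`, `q = 2^h`. -/
def IsMathonType (h : ℕ) (K : Set (Pt F)) (d : ℕ) : Prop :=
  IsMaximalArc F K d ∧
    ∃ g : Pt F → Pt F, IsCollineation F g ∧ ∃ (Λ : Finset F) (a b : F → F),
      IsClosedConicSet F h Λ a b ∧ Λ.card + 1 = d ∧ g '' K = mathonSet F Λ a b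

/-- A maximal arc of degree `d` of Mathon type in `PG(2,q)` with nucleus `n`
(the preimage of `(0,0,1)` under a collineation realizing the Mathon description). -/
def IsMathonWithNucleus (h : ℕ) (K : Set (Pt F)) (d : ℕ) (n : Pt F) : Prop :=
  IsMaximalArc F K d ∧
    ∃ g : Pt F → Pt F, IsCollineation F g ∧ g n = pt001 F ∧
      ∃ (Λ : Finset F) (a b : F → F),
        IsClosedConicSet F h Λ a b ∧ Λ.card + 1 = d ∧ g '' K = mathonSet F Λ a b

/-- A maximal arc of Denniston type: Mathon type where the closed set of conics can
be chosen with `α` and `β` constant. -/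
def IsDennistonType (h : ℕ) (K : Set (Pt F)) : Prop :=
  ∃ g : Pt F → Pt F, IsCollineation F g ∧ ∃ (a b : F) (Λ : Finset F),
    IsClosedConicSet F h Λ (fun _ => a) (fun _ => b) ∧
    g '' K = mathonSet F Λ (fun _ => a) (fun _ => b)

/-- A proper Mathon arc of degree `d`: a Mathon arc that is not of Denniston type. -/
def IsProperMathon (h : ℕ) (K : Set (Pt F)) (d : ℕ) : Prop :=
  IsMathonType F h K d ∧ ¬ IsDennistonType F h K

end MaxArc

namespace SP4

open Matrix MaxArc

set_option linter.unusedSectionVars false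
set_option maxHeartbeats 1000000

variable {F : Type} [Field F] [Fintype F]

instance : Finite (MaxArc.Pt F) := Quotient.finite _
noncomputable instance : Fintype (MaxArc.Pt F) := Fintype.ofFinite _

/-! ### Cross product / projective geometry basics -/

lemma mk_eq_of_not_indep {u v : Fin 3 → F} (hu : u ≠ 0) (hv : v ≠ 0)
    (h : ¬ LinearIndependent F ![u, v]) :
    Projectivization.mk F u hu = Projectivization.mk F v hv := by
  rw [LinearIndependent.pair_iff] at h
  push_neg at h
  obtain ⟨s, t, hst, hne⟩ := h
  rw [Projectivization.mk_eq_mk_iff']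
  have hs : s ≠ 0 := by
    rintro rfl
    have ht : t ≠ 0 := hne rfl
    apply hv
    have : t • v = 0 := by simpa using hst
    simpa [ht] using this
  refine ⟨-t/s, ?_⟩
  have : u = s⁻¹ • (-(t • v)) := by
    rw [← eq_neg_iff_add_eq_zero] at hst
    rw [← hst, smul_smul, inv_mul_cancel₀ hs, one_smul]
  rw [this, smul_neg, smul_smul, div_eq_mul_inv, neg_mul, mul_comm, neg_smul]

lemma cross_ne_zero_of_ne {P Q : MaxArc.Pt F} (h : P ≠ Q) :
    P.rep ⨯₃ Q.rep ≠ 0 := by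
  intro hc
  apply h
  rw [← Projectivization.mk_rep P, ← Projectivization.mk_rep Q]
  exact mk_eq_of_not_indep P.rep_nonzero Q.rep_nonzero
    (fun hli => (crossProduct_ne_zero_iff_linearIndependent.mpr hli) hc)

lemma bac_cab (a b c : Fin 3 → F) :
    a ⨯₃ (b ⨯₃ c) = (a ⬝ᵥ c) • b - (a ⬝ᵥ b) • c := by
  ext i
  fin_cases i <;>
    simp [cross_apply, dotProduct, Fin.sum_univ_three] <;> ring

/-- `P` lies on the line with dual coordinates `D`. -/
def onLine (P D : MaxArc.Pt F) : Prop := D.rep ⬝ᵥ P.rep = 0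

/-- The line with dual point `D`. -/
def ell (D : MaxArc.Pt F) : Set (MaxArc.Pt F) := {P | onLine P D}

lemma mem_ell {P D : MaxArc.Pt F} : P ∈ ell D ↔ onLine P D := Iff.rfl

lemma isLine_ell (D : MaxArc.Pt F) : MaxArc.IsLine F (ell D) := by
  refine ⟨D.rep 0, D.rep 1, D.rep 2, ?_, ?_⟩
  · rintro ⟨h0, h1, h2⟩
    apply D.rep_nonzero
    funext i
    fin_cases i <;> assumption
  · ext P
    simp only [ell, onLine, Set.mem_setOf_eq, dotProduct, Fin.sum_univ_three]

lemma onLine_mk (u : Fin 3 → F) (hu : u ≠ 0) (P : MaxArc.Pt F) :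
    onLine P (Projectivization.mk F u hu) ↔ u ⬝ᵥ P.rep = 0 := by
  unfold onLine
  obtain ⟨a, ha⟩ := Projectivization.exists_smul_eq_mk_rep F u hu
  rw [← ha, Units.smul_def, smul_dotProduct, smul_eq_mul, mul_eq_zero]
  simp [a.ne_zero]

/-- The unique line through two distinct points. -/
noncomputable def lineThrough {P Q : MaxArc.Pt F} (hne : P ≠ Q) : MaxArc.Pt F :=
  Projectivization.mk F (P.rep ⨯₃ Q.rep) (cross_ne_zero_of_ne hne)

lemma onLine_lineThrough_left {P Q : MaxArc.Pt F} (hne : P ≠ Q) :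
    onLine P (lineThrough hne) := by
  unfold lineThrough
  rw [onLine_mk, dotProduct_comm]
  exact dot_self_cross _ _

lemma onLine_lineThrough_right {P Q : MaxArc.Pt F} (hne : P ≠ Q) :
    onLine Q (lineThrough hne) := by
  unfold lineThrough
  rw [onLine_mk, dotProduct_comm]
  exact dot_cross_self _ _

lemma eq_lineThrough {P Q D : MaxArc.Pt F} (hne : P ≠ Q)
    (h1 : onLine P D) (h2 : onLine Q D) : D = lineThrough hne := by
  have hz : D.rep ⨯₃ (P.rep ⨯₃ Q.rep) = 0 := by
    rw [bac_cab, h1, h2, zero_smul, zero_smul, sub_zero]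
  have hni : ¬ LinearIndependent F ![D.rep, P.rep ⨯₃ Q.rep] := by
    intro hli
    exact (crossProduct_ne_zero_iff_linearIndependent.mpr hli) hz
  have := mk_eq_of_not_indep D.rep_nonzero (cross_ne_zero_of_ne hne) hni
  rw [Projectivization.mk_rep] at this
  exact this

/-! ### Counting points -/

lemma cancel3 {q c : ℕ} (hq : 2 ≤ q) (h : c * (q - 1) = q ^ 3 - 1) : c = q ^ 2 + q + 1 := by
  obtain ⟨r, rfl⟩ : ∃ r, q = r + 2 := ⟨q - 2, by omega⟩
  have hs : (r + 2) - 1 = r + 1 := by omega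
  have e : (r+2)^3 = ((r+2)^2 + (r+2) + 1) * (r+1) + 1 := by ring
  have key : ((r+2)^2 + (r+2) + 1) * ((r+2) - 1) = (r+2)^3 - 1 := by
    rw [hs, e, Nat.add_sub_cancel]
  rw [← key] at h
  exact Nat.eq_of_mul_eq_mul_right (by omega) h

lemma cancel2 {q c : ℕ} (hq : 2 ≤ q) (h : c * (q - 1) = q ^ 2 - 1) : c = q + 1 := by
  obtain ⟨r, rfl⟩ : ∃ r, q = r + 2 := ⟨q - 2, by omega⟩
  have hs : (r + 2) - 1 = r + 1 := by omega
  have e : (r+2)^2 = ((r+2) + 1) * (r+1) + 1 := by ring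
  have key : ((r+2) + 1) * ((r+2) - 1) = (r+2)^2 - 1 := by
    rw [hs, e, Nat.add_sub_cancel]
  rw [← key] at h
  exact Nat.eq_of_mul_eq_mul_right (by omega) h

noncomputable def somePt : MaxArc.Pt F := Projectivization.mk F ![1, 0, 0] (by
  intro hc; have := congrFun hc 0; simp at this)

/-- Fiber-counting: projective points with representative in a subspace `W`. -/
lemma card_filter_mem_submodule (W : Submodule F (Fin 3 → F)) :
    (Finset.univ.filter (fun P : MaxArc.Pt F => P.rep ∈ W)).card * (Fintype.card F - 1)
      = Nat.card W - 1 := by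
  classical
  set T := Finset.univ.filter (fun P : MaxArc.Pt F => P.rep ∈ W) with hT
  set Vf := Finset.univ.filter (fun v : Fin 3 → F => v ∈ W ∧ v ≠ 0) with hVf
  set f : (Fin 3 → F) → MaxArc.Pt F := fun v =>
    if h : v = 0 then somePt else Projectivization.mk F v h with hf
  have hmem : ∀ v ∈ Vf, f v ∈ T := by
    intro v hv
    rw [hVf, Finset.mem_filter] at hv
    obtain ⟨-, hvW, hv0⟩ := hv
    rw [hT, Finset.mem_filter]
    refine ⟨Finset.mem_univ _, ?_⟩
    rw [hf]; simp only [dif_neg hv0]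
    obtain ⟨a, ha⟩ := Projectivization.exists_smul_eq_mk_rep F v hv0
    rw [← ha, Units.smul_def]
    exact W.smul_mem _ hvW
  have hsum := Finset.card_eq_sum_card_fiberwise hmem
  have hfib : ∀ P ∈ T, (Vf.filter (fun v => f v = P)).card = Fintype.card F - 1 := by
    intro P hP
    rw [hT, Finset.mem_filter] at hP
    have hPrep : P.rep ∈ W := hP.2
    have himg : Vf.filter (fun v => f v = P)
        = Finset.univ.image (fun a : Fˣ => (a : F) • P.rep) := by
      ext v
      simp only [Finset.mem_filter, Finset.mem_image, Finset.mem_univ, true_and, hVf]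
      constructor
      · rintro ⟨⟨hvW, hv0⟩, hfv⟩
        rw [hf] at hfv; simp only [dif_neg hv0] at hfv
        rw [← Projectivization.mk_rep P, Projectivization.mk_eq_mk_iff] at hfv
        obtain ⟨a, ha⟩ := hfv
        exact ⟨a, by rw [← ha, Units.smul_def]⟩
      · rintro ⟨a, ha⟩
        have hv0 : v ≠ 0 := by
          rw [← ha]
          simp only [ne_eq, smul_eq_zero, not_or]
          exact ⟨a.ne_zero, P.rep_nonzero⟩
        refine ⟨⟨by rw [← ha]; exact W.smul_mem _ hPrep, hv0⟩, ?_⟩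
        rw [hf]; simp only [dif_neg hv0]
        rw [← Projectivization.mk_rep P, Projectivization.mk_eq_mk_iff]
        exact ⟨a, by rw [← ha, Units.smul_def]⟩
    rw [himg, Finset.card_image_of_injective, Finset.card_univ, Fintype.card_units]
    intro a b hab
    simp only at hab
    have : ((a : F) - b) • P.rep = 0 := by
      rw [sub_smul, hab, sub_self]
    rcases smul_eq_zero.mp this with h | h
    · exact Units.ext (sub_eq_zero.mp h)
    · exact absurd h P.rep_nonzero
  rw [Finset.sum_congr rfl hfib, Finset.sum_const, smul_eq_mul] at hsum
  have hVcard : Vf.card = Nat.card W - 1 := by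
    have : Vf = (Finset.univ.filter (fun v : Fin 3 → F => v ∈ W)).erase 0 := by
      ext v
      simp only [hVf, Finset.mem_filter, Finset.mem_erase, Finset.mem_univ, true_and]
      tauto
    rw [this, Finset.card_erase_of_mem (by simp [W.zero_mem])]
    congr 1
    rw [Nat.card_eq_fintype_card]
    exact (Fintype.card_subtype _).symm
  rw [← hVcard, hsum, mul_comm]

lemma natCard_submodule (W : Submodule F (Fin 3 → F)) :
    Nat.card W = Fintype.card F ^ Module.finrank F W := by
  have : Fintype ↥W := Fintype.ofFinite _
  rw [Nat.card_eq_fintype_card]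
  exact Module.card_eq_pow_finrank

lemma card_univ_pt :
    (Finset.univ : Finset (MaxArc.Pt F)).card
      = Fintype.card F ^ 2 + Fintype.card F + 1 := by
  have h := card_filter_mem_submodule (F := F) ⊤
  have hq : 2 ≤ Fintype.card F := Fintype.one_lt_card
  have hfilter : Finset.univ.filter
      (fun P : MaxArc.Pt F => P.rep ∈ (⊤ : Submodule F (Fin 3 → F))) = Finset.univ := by simp
  have hrank : Module.finrank F (⊤ : Submodule F (Fin 3 → F)) = 3 := by
    rw [finrank_top, Module.finrank_pi, Fintype.card_fin]
  rw [hfilter, natCard_submodule, hrank] at h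
  exact cancel3 hq h

noncomputable def dotL (p : Fin 3 → F) : (Fin 3 → F) →ₗ[F] F where
  toFun v := v ⬝ᵥ p
  map_add' x y := add_dotProduct x y p
  map_smul' c x := smul_dotProduct c x p

lemma card_linesThrough (P : MaxArc.Pt F) :
    (Finset.univ.filter (fun D : MaxArc.Pt F => onLine P D)).card
      = Fintype.card F + 1 := by
  have hker : ∀ D : MaxArc.Pt F, onLine P D ↔ D.rep ∈ LinearMap.ker (dotL P.rep) := by
    intro D; rw [LinearMap.mem_ker]; rfl
  have h := card_filter_mem_submodule (LinearMap.ker (dotL (F := F) P.rep))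
  have hsurj : Function.Surjective (dotL (F := F) P.rep) := by
    intro c
    obtain ⟨i, hi⟩ := Function.ne_iff.mp P.rep_nonzero
    refine ⟨Pi.single i (c * (P.rep i)⁻¹), ?_⟩
    show Pi.single i (c * (P.rep i)⁻¹) ⬝ᵥ P.rep = c
    rw [single_dotProduct, mul_assoc, inv_mul_cancel₀ hi, mul_one]
  have hrank : Module.finrank F (LinearMap.ker (dotL (F := F) P.rep)) = 2 := by
    have h1 := LinearMap.finrank_range_add_finrank_ker (dotL (F := F) P.rep)
    rw [LinearMap.range_eq_top.mpr hsurj, finrank_top, Module.finrank_self,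
      Module.finrank_pi, Fintype.card_fin] at h1
    omega
  rw [natCard_submodule, hrank] at h
  have hq : 2 ≤ Fintype.card F := Fintype.one_lt_card
  have hfe : Finset.univ.filter (fun D : MaxArc.Pt F => onLine P D)
      = Finset.univ.filter
        (fun D : MaxArc.Pt F => D.rep ∈ LinearMap.ker (dotL (F := F) P.rep)) := by
    apply Finset.filter_congr
    intro D _
    simp [hker D]
  rw [hfe]
  exact cancel2 hq h

/-! ### Partition and flag counting -/

noncomputable def linesF (p : MaxArc.Pt F) : Finset (MaxArc.Pt F) :=
  Finset.univ.filter (fun D => onLine p D)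

lemma card_linesF (p : MaxArc.Pt F) : (linesF p).card = Fintype.card F + 1 :=
  card_linesThrough p

lemma ncard_inter_eq (S : Set (MaxArc.Pt F)) (D : MaxArc.Pt F) :
    (S ∩ ell D).ncard = ((Set.toFinite S).toFinset.filter (· ∈ ell D)).card := by
  have he : S ∩ ell D = ↑((Set.toFinite S).toFinset.filter (· ∈ ell D)) := by
    ext x
    simp only [Set.mem_inter_iff, Finset.coe_filter, Set.Finite.mem_toFinset, Set.mem_setOf_eq]
  rw [he, Set.ncard_coe_finset]

lemma sum_lines_through (p : MaxArc.Pt F) (S : Set (MaxArc.Pt F)) (hp : p ∉ S) :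
    ∑ D ∈ linesF p, (S ∩ ell D).ncard = S.ncard := by
  classical
  set Sf := (Set.toFinite S).toFinset with hSf
  have hScard : S.ncard = Sf.card := Set.ncard_eq_toFinset_card S (Set.toFinite S)
  set f : MaxArc.Pt F → MaxArc.Pt F :=
    fun s => if h : p = s then p else lineThrough h with hf
  have hmem : ∀ s ∈ Sf, f s ∈ linesF p := by
    intro s hs
    rw [Set.Finite.mem_toFinset] at hs
    have hps : p ≠ s := fun h => hp (h ▸ hs)
    rw [hf]
    simp only [dif_neg hps]
    unfold linesF
    rw [Finset.mem_filter]
    exact ⟨Finset.mem_univ _, onLine_lineThrough_left hps⟩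
  have hsum := Finset.card_eq_sum_card_fiberwise hmem
  have hfib : ∀ D ∈ linesF p, Sf.filter (fun s => f s = D) = Sf.filter (· ∈ ell D) := by
    intro D hD
    have hpD : onLine p D := by
      unfold linesF at hD; rw [Finset.mem_filter] at hD; exact hD.2
    ext s
    simp only [Finset.mem_filter, and_congr_right_iff]
    intro hs
    rw [Set.Finite.mem_toFinset] at hs
    have hps : p ≠ s := fun h => hp (h ▸ hs)
    constructor
    · rintro rfl
      rw [hf]
      simp only [dif_neg hps]
      exact onLine_lineThrough_right hps
    · intro hsD
      rw [hf]
      simp only [dif_neg hps]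
      exact (eq_lineThrough hps hpD hsD).symm
  rw [hScard, hsum]
  apply Finset.sum_congr rfl
  intro D hD
  rw [ncard_inter_eq, hfib D hD]

lemma sum_over_dual (A : Finset (MaxArc.Pt F)) (S : Set (MaxArc.Pt F)) :
    ∑ D ∈ A, (S ∩ ell D).ncard
      = ∑ s ∈ (Set.toFinite S).toFinset, (A.filter (fun D => onLine s D)).card := by
  classical
  have h1 : ∀ D ∈ A, (S ∩ ell D).ncard
      = ∑ s ∈ (Set.toFinite S).toFinset, if onLine s D then 1 else 0 := by
    intro D _
    rw [ncard_inter_eq, Finset.card_filter]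
    rfl
  rw [Finset.sum_congr rfl h1, Finset.sum_comm]
  apply Finset.sum_congr rfl
  intro s _
  rw [Finset.card_filter]

lemma sum_over_all_dual (S : Set (MaxArc.Pt F)) :
    ∑ D ∈ (Finset.univ : Finset (MaxArc.Pt F)), (S ∩ ell D).ncard
      = S.ncard * (Fintype.card F + 1) := by
  rw [sum_over_dual]
  have h1 : ∀ s ∈ (Set.toFinite S).toFinset,
      (Finset.univ.filter (fun D => onLine s D)).card = Fintype.card F + 1 :=
    fun s _ => card_linesThrough s
  rw [Finset.sum_congr rfl h1, Finset.sum_const, smul_eq_mul,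
    ← Set.ncard_eq_toFinset_card S (Set.toFinite S)]

/-- Splitting a sum of `0`-or-`d` terms. -/
lemma sum_eq_d_mul (d : ℕ) (T : Finset (MaxArc.Pt F)) (M : Set (MaxArc.Pt F))
    (hMD : ∀ D, (M ∩ ell D).ncard = 0 ∨ (M ∩ ell D).ncard = d) :
    ∑ D ∈ T, (M ∩ ell D).ncard = d * (T.filter (fun D => ¬ (M ∩ ell D = ∅))).card := by
  classical
  rw [← Finset.sum_filter_add_sum_filter_not T (fun D => ¬ (M ∩ ell D = ∅))]
  have h2 : ∑ D ∈ T.filter (fun D => ¬ ¬ (M ∩ ell D = ∅)), (M ∩ ell D).ncard = 0 := by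
    apply Finset.sum_eq_zero
    intro D hD
    rw [Finset.mem_filter, not_not] at hD
    rw [hD.2, Set.ncard_empty]
  have h1 : ∑ D ∈ T.filter (fun D => ¬ (M ∩ ell D = ∅)), (M ∩ ell D).ncard
      = (T.filter (fun D => ¬ (M ∩ ell D = ∅))).card * d := by
    apply Finset.sum_eq_card_nsmul
    intro D hD
    rw [Finset.mem_filter] at hD
    rcases hMD D with h | h
    · exfalso
      exact hD.2 ((Set.ncard_eq_zero (Set.toFinite _)).mp h)
    · exact h
  rw [h1, h2, add_zero, mul_comm]

/-! ### Collineations are injective -/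

lemma collineation_injective {g : MaxArc.Pt F → MaxArc.Pt F}
    (hg : MaxArc.IsCollineation F g) : Function.Injective g := by
  obtain ⟨σ, M, hdet, hform⟩ := hg
  have hMinj : ∀ w : Fin 3 → F, M.mulVec w = 0 → w = 0 := by
    intro w hw
    have := congrArg (M⁻¹.mulVec) hw
    rwa [Matrix.mulVec_mulVec, Matrix.nonsing_inv_mul M hdet, Matrix.one_mulVec,
      Matrix.mulVec_zero] at this
  have hsig : ∀ v : Fin 3 → F, v ≠ 0 → (fun i => σ (v i)) ≠ 0 := by
    intro v hv hc
    apply hv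
    funext i
    have := congrFun hc i
    simp only [Pi.zero_apply] at this ⊢
    exact (map_eq_zero σ).mp this
  have hT : ∀ v : Fin 3 → F, v ≠ 0 → M.mulVec (fun i => σ (v i)) ≠ 0 := by
    intro v hv hc
    exact hsig v hv (hMinj _ hc)
  intro P Q hPQ
  rw [← Projectivization.mk_rep P, ← Projectivization.mk_rep Q] at hPQ ⊢
  rw [hform P.rep P.rep_nonzero (hT _ P.rep_nonzero),
    hform Q.rep Q.rep_nonzero (hT _ Q.rep_nonzero),
    Projectivization.mk_eq_mk_iff] at hPQ
  obtain ⟨a, ha⟩ := hPQ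
  rw [Units.smul_def, ← Matrix.mulVec_smul] at ha
  have heq : (fun i => σ (P.rep i)) = (a : F) • (fun i => σ (Q.rep i)) := by
    have h0 : M.mulVec ((a : F) • (fun i => σ (Q.rep i)) - (fun i => σ (P.rep i))) = 0 := by
      rw [Matrix.mulVec_sub, ha, sub_self]
    have := hMinj _ h0
    rw [sub_eq_zero] at this
    exact this.symm
  rw [Projectivization.mk_eq_mk_iff']
  refine ⟨σ.symm a, ?_⟩
  funext i
  have hi := congrFun heq i
  simp only [Pi.smul_apply, smul_eq_mul] at hi ⊢
  apply σ.injective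
  rw [_root_.map_mul, RingEquiv.apply_symm_apply, ← hi]

end SP4


/-- given a degree `d < q/2` maximal arc `M` of Mathon type with
nucleus `n` and a nondegenerate conic `C` with the same nucleus disjoint from `M`,
there is a line external to `M ∪ C`. -/
theorem statement4 {F : Type} [Field F] [Fintype F] (h : ℕ)
    (hcard : Fintype.card F = 2 ^ h)
    (M : Set (MaxArc.Pt F)) (d : ℕ) (n : MaxArc.Pt F)
    (hM : MaxArc.IsMathonWithNucleus F h M d n)
    (hd : 2 * d < Fintype.card F)
    (C : Set (MaxArc.Pt F)) (hC : MaxArc.IsConicWithNucleus F C n)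
    (hdisj : Disjoint C M) :
    ∃ L : Set (MaxArc.Pt F), MaxArc.IsLine F L ∧ L ∩ (M ∪ C) = ∅ := by
  classical
  by_contra hcon
  push_neg at hcon
  -- notation
  have hcon' : ∀ D : MaxArc.Pt F, (SP4.ell D ∩ (M ∪ C)).Nonempty :=
    fun D => hcon (SP4.ell D) (SP4.isLine_ell D)
  obtain ⟨⟨hMne, hMproper, hMline⟩, g, hgcol, hgn, Λ, a, b, hclosed, hdcard, hgM⟩ := hM
  obtain ⟨-, hCcard, hCsec, hCtan⟩ := hC
  have hd1 : 1 ≤ d := by omega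
  have hq2 : 2 ≤ Fintype.card F := Fintype.one_lt_card
  -- the nucleus lies in the arc
  have hnM : n ∈ M := by
    have hpt : MaxArc.pt001 F ∈ MaxArc.mathonSet F Λ a b := by
      left; rfl
    rw [← hgM] at hpt
    obtain ⟨m, hmM, hgm⟩ := hpt
    have : m = n := SP4.collineation_injective hgcol (by rw [hgm, hgn])
    rwa [← this]
  -- arc intersection numbers
  have hMD : ∀ D : MaxArc.Pt F, (M ∩ SP4.ell D).ncard = 0 ∨ (M ∩ SP4.ell D).ncard = d :=
    fun D => hMline _ (SP4.isLine_ell D)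
  -- external lines to M meet C in exactly two points
  have hCD : ∀ D : MaxArc.Pt F, M ∩ SP4.ell D = ∅ → (C ∩ SP4.ell D).ncard = 2 := by
    intro D hMD0
    have hne : (C ∩ SP4.ell D).Nonempty := by
      obtain ⟨x, hx1, hx2⟩ := hcon' D
      rcases hx2 with hxM | hxC
      · exfalso
        have : x ∈ M ∩ SP4.ell D := ⟨hxM, hx1⟩
        rw [hMD0] at this
        exact this
      · exact ⟨x, hxC, hx1⟩
    have hle : (C ∩ SP4.ell D).ncard ≤ 2 := hCsec _ (SP4.isLine_ell D)
    have hge : 1 ≤ (C ∩ SP4.ell D).ncard := by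
      rw [Nat.one_le_iff_ne_zero]
      intro h0
      rw [(Set.ncard_eq_zero (Set.toFinite _))] at h0
      exact hne.ne_empty h0
    have hne1 : (C ∩ SP4.ell D).ncard ≠ 1 := by
      intro h1
      have hnD : n ∈ SP4.ell D := hCtan _ (SP4.isLine_ell D) h1
      have : n ∈ M ∩ SP4.ell D := ⟨hnM, hnD⟩
      rw [hMD0] at this
      exact this
    omega
  set q := Fintype.card F with hqdef
  -- cardinality of M
  obtain ⟨m, hm⟩ := hMne
  have hmLine : ∀ D ∈ SP4.linesF m, (M ∩ SP4.ell D).ncard = d := by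
    intro D hD
    have hmD : SP4.onLine m D := (Finset.mem_filter.mp hD).2
    rcases hMD D with h0 | hdd
    · exfalso
      have : m ∈ M ∩ SP4.ell D := ⟨hm, hmD⟩
      rw [(Set.ncard_eq_zero (Set.toFinite _)).mp h0] at this
      exact this
    · exact hdd
  have hm0 : M.ncard = (q + 1) * (d - 1) + 1 := by
    have hpart := SP4.sum_lines_through m (M \ {m}) (by simp)
    have hterm : ∀ D ∈ SP4.linesF m, ((M \ {m}) ∩ SP4.ell D).ncard = d - 1 := by
      intro D hD
      have hmD : SP4.onLine m D := (Finset.mem_filter.mp hD).2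
      have hset : (M \ {m}) ∩ SP4.ell D = (M ∩ SP4.ell D) \ {m} := by
        ext x; simp only [Set.mem_inter_iff, Set.mem_diff, Set.mem_singleton_iff]; tauto
      have hmm : m ∈ M ∩ SP4.ell D := Set.mem_inter hm hmD
      rw [hset, Set.ncard_diff_singleton_of_mem hmm, hmLine D hD]
    rw [Finset.sum_congr rfl hterm, Finset.sum_const, smul_eq_mul, SP4.card_linesF,
      Set.ncard_diff_singleton_of_mem hm] at hpart
    have hpart2 : (q + 1) * (d - 1) = M.ncard - 1 := hpart
    clear hpart
    have hMpos : 1 ≤ M.ncard := by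
      rw [Nat.one_le_iff_ne_zero]
      intro h0
      rw [(Set.ncard_eq_zero (Set.toFinite _))] at h0
      rw [h0] at hm
      exact hm
    omega
  -- secant count through a point off M
  have hsplit : ∀ p : MaxArc.Pt F, p ∉ M →
      d * (((SP4.linesF p)).filter (fun D => ¬ (M ∩ SP4.ell D = ∅))).card = M.ncard := by
    intro p hp
    rw [← SP4.sum_eq_d_mul d _ M hMD]
    exact SP4.sum_lines_through p M hp
  have hCdisj : ∀ c ∈ C, c ∉ M := fun c hc => Set.disjoint_left.mp hdisj hc
  have hCne : C.Nonempty := by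
    rw [← Set.ncard_pos (Set.toFinite C), hCcard]
    omega
  obtain ⟨c₀, hc₀⟩ := hCne
  set s := (((SP4.linesF c₀)).filter (fun D => ¬ (M ∩ SP4.ell D = ∅))).card with hsdef
  have hds : d * s = M.ncard := hsplit c₀ (hCdisj c₀ hc₀)
  have hsle : s ≤ q + 1 := by
    rw [hsdef, ← SP4.card_linesF c₀]
    exact Finset.card_filter_le _ _
  -- external line count through each point of C
  have hext : ∀ c ∈ C, (((SP4.linesF c)).filter (fun D => M ∩ SP4.ell D = ∅)).card
      = (q + 1) - s := by
    intro c hc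
    have h1 := hsplit c (hCdisj c hc)
    have h2 : (((SP4.linesF c)).filter (fun D => ¬ (M ∩ SP4.ell D = ∅))).card = s := by
      apply Nat.eq_of_mul_eq_mul_left (show 0 < d by omega)
      rw [h1, hds]
    have h3 := Finset.card_filter_add_card_filter_not
      (s := SP4.linesF c) (p := fun D => M ∩ SP4.ell D = ∅)
    rw [SP4.card_linesF] at h3
    omega
  -- global counts
  set A := Finset.univ.filter (fun D : MaxArc.Pt F => M ∩ SP4.ell D = ∅) with hAdef
  set B := Finset.univ.filter (fun D : MaxArc.Pt F => ¬ (M ∩ SP4.ell D = ∅)) with hBdef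
  have hAB : A.card + B.card = q ^ 2 + q + 1 := by
    rw [hAdef, hBdef, Finset.card_filter_add_card_filter_not, SP4.card_univ_pt]
  have hdB : d * B.card = M.ncard * (q + 1) := by
    rw [hBdef, ← SP4.sum_eq_d_mul d _ M hMD, SP4.sum_over_all_dual]
  have hBcard : B.card = s * (q + 1) := by
    apply Nat.eq_of_mul_eq_mul_left (show 0 < d by omega)
    rw [hdB, ← hds, mul_assoc]
  -- flag count between A and C
  have hflagA : ∑ D ∈ A, (C ∩ SP4.ell D).ncard = 2 * A.card := by
    have : ∀ D ∈ A, (C ∩ SP4.ell D).ncard = 2 := by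
      intro D hD
      exact hCD D (Finset.mem_filter.mp hD).2
    rw [Finset.sum_congr rfl this, Finset.sum_const, smul_eq_mul, mul_comm]
  have hflagC : ∑ D ∈ A, (C ∩ SP4.ell D).ncard = (q + 1) * ((q + 1) - s) := by
    rw [SP4.sum_over_dual]
    have hterm : ∀ c ∈ (Set.toFinite C).toFinset,
        (A.filter (fun D => SP4.onLine c D)).card = (q + 1) - s := by
      intro c hc
      rw [Set.Finite.mem_toFinset] at hc
      have : A.filter (fun D => SP4.onLine c D)
          = ((SP4.linesF c)).filter (fun D => M ∩ SP4.ell D = ∅) := by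
        rw [hAdef]
        unfold SP4.linesF
        rw [Finset.filter_filter, Finset.filter_filter]
        apply Finset.filter_congr
        intro D _
        tauto
      rw [this]
      exact hext c hc
    rw [Finset.sum_congr rfl hterm, Finset.sum_const, smul_eq_mul,
      ← Set.ncard_eq_toFinset_card C (Set.toFinite C), hCcard]
  -- final contradiction, in ℤ
  have h2A : 2 * A.card = (q + 1) * ((q + 1) - s) := by rw [← hflagA, hflagC]
  have hZ : False := by
    have z1 : (M.ncard : ℤ) = (q + 1) * (d - 1) + 1 := by
      zify [hd1] at hm0
      linear_combination hm0
    have z2 : (d : ℤ) * s = M.ncard := by exact_mod_cast hds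
    have z4 : (B.card : ℤ) = s * (q + 1) := by exact_mod_cast hBcard
    have z3 : (A.card : ℤ) + B.card = q ^ 2 + q + 1 := by exact_mod_cast hAB
    have z5 : 2 * (A.card : ℤ) = (q + 1) * ((q + 1) - s) := by
      zify [hsle] at h2A
      linear_combination h2A
    have e2 : (s : ℤ) * (q + 1) = q ^ 2 + 1 := by linear_combination 2 * z3 - z5 - 2 * z4
    have e3 : (d : ℤ) * (q + 1) - d * s = q := by linear_combination -z1 - z2
    have e4 : (q : ℤ) * (2 * d - q - 1) = 0 := by
      linear_combination (q + 1) * e3 + (d : ℤ) * e2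
    have hq3 : (3 : ℤ) ≤ q := by exact_mod_cast (by omega : 3 ≤ q)
    have hlt : 2 * (d : ℤ) < q := by exact_mod_cast hd
    nlinarith [e4, hq3, hlt]
  exact hZ
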